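/- Assume d·γ ≤ 2·γ*. There exists c > 0, depending only on ℓ, α, m, d, J, γ, γ*, such that for every λ ∈ ℝ and every solution (u, v, w, z) of the resolvent system with data (f₁, f₂, f₄): |w|² + |z|² ≤ c·‖F‖·‖U‖. -/

import Mathlib

open MeasureTheory ComplexConjugate

/-- A solution `(λ, u, v, w, z)` (with `w = v 0`, `z = v1 0`) of the resolvent system of the
hybrid Euler–Bernoulli beam with tip body, with data `(f₁, f₂, f₄)`. The fields `u1,…,u4`
(resp. `v1, v2`, `f1d, f1dd`) are the successive derivatives of `u` (resp. `v`, `f1`)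
on `[0,ℓ]`. -/
structure ResolventSol (ℓ α m d J γ γs : ℝ) where
  lam : ℝ
  u : ℝ → ℂ
  u1 : ℝ → ℂ
  u2 : ℝ → ℂ
  u3 : ℝ → ℂ
  u4 : ℝ → ℂ
  v : ℝ → ℂ
  v1 : ℝ → ℂ
  v2 : ℝ → ℂ
  f1 : ℝ → ℂ
  f1d : ℝ → ℂ
  f1dd : ℝ → ℂ
  f2 : ℝ → ℂ
  f41 : ℂ
  f42 : ℂ
  hu1 : ∀ x ∈ Set.Icc (0:ℝ) ℓ, HasDerivWithinAt u (u1 x) (Set.Icc 0 ℓ) x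
  hu2 : ∀ x ∈ Set.Icc (0:ℝ) ℓ, HasDerivWithinAt u1 (u2 x) (Set.Icc 0 ℓ) x
  hu3 : ∀ x ∈ Set.Icc (0:ℝ) ℓ, HasDerivWithinAt u2 (u3 x) (Set.Icc 0 ℓ) x
  hu4 : ∀ x ∈ Set.Icc (0:ℝ) ℓ, HasDerivWithinAt u3 (u4 x) (Set.Icc 0 ℓ) x
  hu4c : ContinuousOn u4 (Set.Icc 0 ℓ)
  hv1 : ∀ x ∈ Set.Icc (0:ℝ) ℓ, HasDerivWithinAt v (v1 x) (Set.Icc 0 ℓ) x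
  hv2 : ∀ x ∈ Set.Icc (0:ℝ) ℓ, HasDerivWithinAt v1 (v2 x) (Set.Icc 0 ℓ) x
  hv2c : ContinuousOn v2 (Set.Icc 0 ℓ)
  hf11 : ∀ x ∈ Set.Icc (0:ℝ) ℓ, HasDerivWithinAt f1 (f1d x) (Set.Icc 0 ℓ) x
  hf12 : ∀ x ∈ Set.Icc (0:ℝ) ℓ, HasDerivWithinAt f1d (f1dd x) (Set.Icc 0 ℓ) x
  hf1c : ContinuousOn f1dd (Set.Icc 0 ℓ)
  hf2c : ContinuousOn f2 (Set.Icc 0 ℓ)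
  res1 : ∀ x ∈ Set.Icc (0:ℝ) ℓ, Complex.I * (lam : ℂ) * u x - v x = f1 x
  res2 : ∀ x ∈ Set.Icc (0:ℝ) ℓ, Complex.I * (lam : ℂ) * v x + (α : ℂ) * u4 x = f2 x
  res3 : Complex.I * (lam : ℂ) * ((m : ℂ) * v 0 + (m : ℂ) * (d : ℂ) * v1 0) +
      (γ : ℂ) * v 0 + (α : ℂ) * u3 0 = (m : ℂ) * f41 + (m : ℂ) * (d : ℂ) * f42
  res4 : Complex.I * (lam : ℂ) * ((m : ℂ) * (d : ℂ) * v 0 +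
        ((J : ℂ) + (m : ℂ) * (d : ℂ) ^ 2) * v1 0) +
      (d : ℂ) * (γ : ℂ) * v 0 + (d : ℂ) * (γs : ℂ) * v1 0 - (α : ℂ) * u2 0 =
      (m : ℂ) * (d : ℂ) * f41 + ((J : ℂ) + (m : ℂ) * (d : ℂ) ^ 2) * f42
  bcu : u ℓ = 0
  bcu1 : u1 ℓ = 0
  bcv : v ℓ = 0
  bcv1 : v1 ℓ = 0

variable {ℓ α m d J γ γs : ℝ}

/-- The phase-space norm `‖U‖` of a resolvent solution. -/
noncomputable def normU (R : ResolventSol ℓ α m d J γ γs) : ℝ :=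
  Real.sqrt ((∫ x in (0:ℝ)..ℓ, (‖R.v x‖ ^ 2 + α * ‖R.u2 x‖ ^ 2)) +
    m * ‖R.v 0‖ ^ 2 + 2 * m * d * (R.v 0 * conj (R.v1 0)).re +
    (J + m * d ^ 2) * ‖R.v1 0‖ ^ 2)

/-- The phase-space norm `‖F‖` of the data of a resolvent solution. -/
noncomputable def normF (R : ResolventSol ℓ α m d J γ γs) : ℝ :=
  Real.sqrt ((∫ x in (0:ℝ)..ℓ, (‖R.f2 x‖ ^ 2 + α * ‖R.f1dd x‖ ^ 2)) +
    m * ‖R.f41‖ ^ 2 + 2 * m * d * (R.f41 * conj R.f42).re +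
    (J + m * d ^ 2) * ‖R.f42‖ ^ 2)

private lemma norm_combo (t : ℝ) (a b : ℂ) :
    ‖(t:ℂ) * a + b‖ ^ 2 = t^2 * ‖a‖^2 + 2 * t * (a * conj b).re + ‖b‖^2 := by
  simp only [Complex.sq_norm, Complex.normSq_apply, Complex.mul_re,
    Complex.add_re, Complex.add_im, Complex.mul_im, Complex.conj_re, Complex.conj_im,
    Complex.ofReal_re, Complex.ofReal_im]
  ring

private lemma tip_quad (m d J t : ℝ) (a b W Z : ℂ) :
    m * ‖(t:ℂ)*a + W + (d:ℂ)*((t:ℂ)*b + Z)‖^2 + J * ‖(t:ℂ)*b + Z‖^2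
      = (m * ‖a‖^2 + 2*m*d*(a * conj b).re + (J + m*d^2) * ‖b‖^2) * (t*t)
        + (2 * (((m:ℂ)*a + (m:ℂ)*(d:ℂ)*b) * conj W
            + ((m:ℂ)*(d:ℂ)*a + ((J:ℂ)+(m:ℂ)*(d:ℂ)^2)*b) * conj Z).re) * t
        + (m * ‖W‖^2 + 2*m*d*(W * conj Z).re + (J + m*d^2) * ‖Z‖^2) := by
  simp only [Complex.sq_norm, Complex.normSq_apply, Complex.mul_re,
    Complex.add_re, Complex.add_im, Complex.mul_im, Complex.conj_re, Complex.conj_im,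
    Complex.ofReal_re, Complex.ofReal_im, ← Complex.ofReal_pow]
  ring

private lemma tip_nonneg_rewrite (m d J : ℝ) (a b : ℂ) :
    m * ‖a‖^2 + 2*m*d*(a * conj b).re + (J + m*d^2) * ‖b‖^2
      = m * ‖a + (d:ℂ)*b‖^2 + J * ‖b‖^2 := by
  simp only [Complex.sq_norm, Complex.normSq_apply, Complex.mul_re,
    Complex.add_re, Complex.add_im, Complex.mul_im, Complex.conj_re, Complex.conj_im,
    Complex.ofReal_re, Complex.ofReal_im]
  ring

private lemma deriv_eq_on_Icc {ℓ : ℝ} (hℓ : 0 < ℓ) {g g' : ℝ → ℂ}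
    (hg : ∀ x ∈ Set.Icc (0:ℝ) ℓ, HasDerivWithinAt g (g' x) (Set.Icc 0 ℓ) x)
    (h0 : ∀ x ∈ Set.Icc (0:ℝ) ℓ, g x = 0) :
    ∀ x ∈ Set.Icc (0:ℝ) ℓ, g' x = 0 := by
  intro x hx
  have h1 : HasDerivWithinAt (fun _ => (0:ℂ)) (g' x) (Set.Icc 0 ℓ) x :=
    (hg x hx).congr (fun y hy => (h0 y hy).symm) (h0 x hx).symm
  have h2 : HasDerivWithinAt (fun _ : ℝ => (0:ℂ)) 0 (Set.Icc 0 ℓ) x :=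
    hasDerivWithinAt_const _ _ _
  exact ((uniqueDiffOn_Icc hℓ) x hx).eq_deriv _ h1 h2

private lemma quad_lower (d γ γs ε a b X : ℝ)
    (hd : 0 < d) (hγ : 0 < γ) (hyp : d * γ ≤ 2 * γs) (hX : -(a * b) ≤ X)
    (hε1 : ε ≤ γ / 4) (hε2 : ε ≤ d * γs / 3) :
    ε * (a ^ 2 + b ^ 2) ≤ γ * a ^ 2 + d * γ * X + d * γs * b ^ 2 := by
  have hmul : d * γ * (-(a * b)) ≤ d * γ * X :=
    mul_le_mul_of_nonneg_left hX (by positivity)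
  nlinarith [mul_nonneg hγ.le (sq_nonneg (3 * a - 2 * d * b)),
    mul_nonneg (mul_nonneg hd.le (sub_nonneg.2 hyp)) (sq_nonneg b),
    mul_le_mul_of_nonneg_right hε1 (sq_nonneg a),
    mul_le_mul_of_nonneg_right hε2 (sq_nonneg b)]

/-- Basic dissipation estimate for the resolvent system: `|w|² + |z|² ≤ c ‖F‖ ‖U‖`. -/
theorem resolvent_tip_estimate (ℓ α m d J γ γs : ℝ)
    (hℓ : 0 < ℓ) (hα : 0 < α) (hm : 0 < m) (hd : 0 < d) (hJ : 0 < J)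
    (hγ : 0 < γ) (hγs : 0 < γs) (hyp : d * γ ≤ 2 * γs) :
    ∃ c > 0, ∀ R : ResolventSol ℓ α m d J γ γs,
      ‖R.v 0‖ ^ 2 + ‖R.v1 0‖ ^ 2 ≤ c * normF R * normU R := by
  have hε : (0:ℝ) < min (γ/4) (d*γs/3) := lt_min (by positivity) (by positivity)
  refine ⟨1 / min (γ/4) (d*γs/3), by positivity, fun R => ?_⟩
  set ε := min (γ/4) (d*γs/3) with hεdef
  clear_value ε
  have h0mem : (0:ℝ) ∈ Set.Icc (0:ℝ) ℓ := ⟨le_refl _, hℓ.le⟩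
  have hlmem : ℓ ∈ Set.Icc (0:ℝ) ℓ := ⟨hℓ.le, le_refl _⟩
  -- continuity facts
  have hvc : ContinuousOn R.v (Set.Icc 0 ℓ) := fun x hx => (R.hv1 x hx).continuousWithinAt
  have hv1c : ContinuousOn R.v1 (Set.Icc 0 ℓ) := fun x hx => (R.hv2 x hx).continuousWithinAt
  have hu2c : ContinuousOn R.u2 (Set.Icc 0 ℓ) := fun x hx => (R.hu3 x hx).continuousWithinAt
  have hu3c : ContinuousOn R.u3 (Set.Icc 0 ℓ) := fun x hx => (R.hu4 x hx).continuousWithinAt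
  -- derived pointwise identities
  have hd1 : ∀ x ∈ Set.Icc (0:ℝ) ℓ,
      Complex.I * (R.lam : ℂ) * R.u1 x - R.v1 x - R.f1d x = 0 := by
    apply deriv_eq_on_Icc hℓ (g := fun x => Complex.I * (R.lam : ℂ) * R.u x - R.v x - R.f1 x)
    · intro x hx
      exact (((R.hu1 x hx).const_mul (Complex.I * (R.lam : ℂ))).sub (R.hv1 x hx)).sub
        (R.hf11 x hx)
    · intro x hx
      rw [R.res1 x hx]; ring
  have hd2 : ∀ x ∈ Set.Icc (0:ℝ) ℓ,
      Complex.I * (R.lam : ℂ) * R.u2 x - R.v2 x - R.f1dd x = 0 := by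
    apply deriv_eq_on_Icc hℓ
      (g := fun x => Complex.I * (R.lam : ℂ) * R.u1 x - R.v1 x - R.f1d x)
    · intro x hx
      exact (((R.hu2 x hx).const_mul (Complex.I * (R.lam : ℂ))).sub (R.hv2 x hx)).sub
        (R.hf12 x hx)
    · exact hd1
  have hf1dd_eq : ∀ x ∈ Set.Icc (0:ℝ) ℓ,
      R.f1dd x = Complex.I * (R.lam : ℂ) * R.u2 x - R.v2 x := by
    intro x hx
    have := hd2 x hx
    linear_combination -this
  -- the FTC function
  have hHd : ∀ x ∈ Set.Icc (0:ℝ) ℓ,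
      HasDerivWithinAt (fun y => (α:ℂ) * (R.u3 y * conj (R.v y) - R.u2 y * conj (R.v1 y)))
        ((α:ℂ) * (R.u4 x * conj (R.v x) - R.u2 x * conj (R.v2 x))) (Set.Icc 0 ℓ) x := by
    intro x hx
    have h1 : HasDerivWithinAt (fun y => R.u3 y * conj (R.v y))
        (R.u4 x * conj (R.v x) + R.u3 x * conj (R.v1 x)) (Set.Icc 0 ℓ) x := by
      exact (R.hu4 x hx).mul ((R.hv1 x hx).star)
    have h2 : HasDerivWithinAt (fun y => R.u2 y * conj (R.v1 y))
        (R.u3 x * conj (R.v1 x) + R.u2 x * conj (R.v2 x)) (Set.Icc 0 ℓ) x := by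
      exact (R.hu3 x hx).mul ((R.hv2 x hx).star)
    have h3 := (h1.sub h2).const_mul ((α:ℂ))
    exact h3.congr_deriv (by ring)
  have hHcont : ContinuousOn
      (fun y => (α:ℂ) * (R.u3 y * conj (R.v y) - R.u2 y * conj (R.v1 y)))
      (Set.Icc 0 ℓ) := fun x hx => (hHd x hx).continuousWithinAt
  have hconj_cont : ∀ {g : ℝ → ℂ}, ContinuousOn g (Set.Icc (0:ℝ) ℓ) →
      ContinuousOn (fun y => conj (g y)) (Set.Icc (0:ℝ) ℓ) := by
    intro g hg
    simpa only [← Complex.star_def] using hg.star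
  have hgcont : ContinuousOn
      (fun x => (α:ℂ) * (R.u4 x * conj (R.v x) - R.u2 x * conj (R.v2 x)))
      (Set.Icc 0 ℓ) :=
    continuousOn_const.mul ((R.hu4c.mul (hconj_cont hvc)).sub (hu2c.mul (hconj_cont R.hv2c)))
  have hgint : IntervalIntegrable
      (fun x => (α:ℂ) * (R.u4 x * conj (R.v x) - R.u2 x * conj (R.v2 x))) volume 0 ℓ := by
    apply ContinuousOn.intervalIntegrable
    rwa [Set.uIcc_of_le hℓ.le]
  have hftc : (∫ x in (0:ℝ)..ℓ, (α:ℂ) * (R.u4 x * conj (R.v x) - R.u2 x * conj (R.v2 x)))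
      = -((α:ℂ) * (R.u3 0 * conj (R.v 0) - R.u2 0 * conj (R.v1 0))) := by
    have := intervalIntegral.integral_eq_sub_of_hasDeriv_right_of_le hℓ.le hHcont
      (fun x hx => ((hHd x ⟨hx.1.le, hx.2.le⟩).hasDerivAt
        (Icc_mem_nhds hx.1 hx.2)).hasDerivWithinAt) hgint
    rw [this, R.bcv, R.bcv1]
    simp
  -- re of interval integrals
  have hre : ∀ (g : ℝ → ℂ), IntervalIntegrable g volume 0 ℓ →
      (∫ x in (0:ℝ)..ℓ, g x).re = ∫ x in (0:ℝ)..ℓ, (g x).re := by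
    intro g hg
    have := Complex.reCLM.intervalIntegral_comp_comm hg
    simpa only [Complex.reCLM_apply] using this.symm
  -- the pairing integrand
  have hPcont : ContinuousOn
      (fun x => R.f2 x * conj (R.v x) + (α:ℂ) * (R.f1dd x * conj (R.u2 x)))
      (Set.Icc 0 ℓ) :=
    (R.hf2c.mul (hconj_cont hvc)).add
      (continuousOn_const.mul (R.hf1c.mul (hconj_cont hu2c)))
  have hPint : IntervalIntegrable
      (fun x => R.f2 x * conj (R.v x) + (α:ℂ) * (R.f1dd x * conj (R.u2 x))) volume 0 ℓ := by
    apply ContinuousOn.intervalIntegrable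
    rwa [Set.uIcc_of_le hℓ.le]
  -- pointwise real-part identity
  have hptre : ∀ x ∈ Set.Icc (0:ℝ) ℓ,
      (R.f2 x * conj (R.v x) + (α:ℂ) * (R.f1dd x * conj (R.u2 x))).re
        = ((α:ℂ) * (R.u4 x * conj (R.v x) - R.u2 x * conj (R.v2 x))).re := by
    intro x hx
    rw [← R.res2 x hx, hf1dd_eq x hx]
    simp only [Complex.mul_re, Complex.add_re, Complex.sub_re, Complex.mul_im,
      Complex.add_im, Complex.sub_im, Complex.I_re, Complex.I_im, Complex.ofReal_re,
      Complex.ofReal_im, Complex.conj_re, Complex.conj_im]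
    ring
  have hPre : (∫ x in (0:ℝ)..ℓ,
        (R.f2 x * conj (R.v x) + (α:ℂ) * (R.f1dd x * conj (R.u2 x)))).re
      = (-((α:ℂ) * (R.u3 0 * conj (R.v 0) - R.u2 0 * conj (R.v1 0)))).re := by
    rw [hre _ hPint, ← hftc, hre _ hgint]
    apply intervalIntegral.integral_congr
    intro x hx
    rw [Set.uIcc_of_le hℓ.le] at hx
    exact hptre x hx
  -- tip pairing
  set T : ℂ := ((m:ℂ) * R.f41 + (m:ℂ)*(d:ℂ) * R.f42) * conj (R.v 0)
      + ((m:ℂ)*(d:ℂ) * R.f41 + ((J:ℂ) + (m:ℂ)*(d:ℂ)^2) * R.f42) * conj (R.v1 0) with hTdef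
  have hT : T = (Complex.I * (R.lam : ℂ) * ((m : ℂ) * R.v 0 + (m : ℂ) * (d : ℂ) * R.v1 0) +
        (γ : ℂ) * R.v 0 + (α : ℂ) * R.u3 0) * conj (R.v 0)
      + (Complex.I * (R.lam : ℂ) * ((m : ℂ) * (d : ℂ) * R.v 0 +
          ((J : ℂ) + (m : ℂ) * (d : ℂ) ^ 2) * R.v1 0) +
        (d : ℂ) * (γ : ℂ) * R.v 0 + (d : ℂ) * (γs : ℂ) * R.v1 0 - (α : ℂ) * R.u2 0)
        * conj (R.v1 0) := by
    rw [hTdef, R.res3, R.res4]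
  -- key energy identity
  have key : (∫ x in (0:ℝ)..ℓ,
        (R.f2 x * conj (R.v x) + (α:ℂ) * (R.f1dd x * conj (R.u2 x)))).re + T.re
      = γ * ‖R.v 0‖^2 + d*γ*(R.v 0 * conj (R.v1 0)).re + d*γs*‖R.v1 0‖^2 := by
    rw [hPre, hT]
    simp only [Complex.sq_norm, Complex.normSq_apply, Complex.mul_re,
      Complex.add_re, Complex.sub_re, Complex.neg_re, Complex.mul_im, Complex.add_im,
      Complex.sub_im, Complex.neg_im, Complex.I_re, Complex.I_im, Complex.ofReal_re,
      Complex.ofReal_im, Complex.conj_re, Complex.conj_im, ← Complex.ofReal_pow]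
    ring
  -- squared norms
  set NF2 : ℝ := (∫ x in (0:ℝ)..ℓ, (‖R.f2 x‖ ^ 2 + α * ‖R.f1dd x‖ ^ 2)) +
      m * ‖R.f41‖ ^ 2 + 2 * m * d * (R.f41 * conj R.f42).re +
      (J + m * d ^ 2) * ‖R.f42‖ ^ 2 with hNF2
  set NU2 : ℝ := (∫ x in (0:ℝ)..ℓ, (‖R.v x‖ ^ 2 + α * ‖R.u2 x‖ ^ 2)) +
      m * ‖R.v 0‖ ^ 2 + 2 * m * d * (R.v 0 * conj (R.v1 0)).re +
      (J + m * d ^ 2) * ‖R.v1 0‖ ^ 2 with hNU2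
  set B : ℝ := (∫ x in (0:ℝ)..ℓ,
      (R.f2 x * conj (R.v x) + (α:ℂ) * (R.f1dd x * conj (R.u2 x)))).re + T.re with hB
  clear_value NF2 NU2 B
  -- integrability of real integrands
  have hcF : ContinuousOn (fun x => ‖R.f2 x‖ ^ 2 + α * ‖R.f1dd x‖ ^ 2) (Set.Icc 0 ℓ) :=
    ((R.hf2c.norm.pow 2)).add (continuousOn_const.mul (R.hf1c.norm.pow 2))
  have hcU : ContinuousOn (fun x => ‖R.v x‖ ^ 2 + α * ‖R.u2 x‖ ^ 2) (Set.Icc 0 ℓ) :=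
    ((hvc.norm.pow 2)).add (continuousOn_const.mul (hu2c.norm.pow 2))
  have hcP : ContinuousOn
      (fun x => (R.f2 x * conj (R.v x) + (α:ℂ) * (R.f1dd x * conj (R.u2 x))).re)
      (Set.Icc 0 ℓ) := Complex.continuous_re.comp_continuousOn hPcont
  have hiF : IntervalIntegrable (fun x => ‖R.f2 x‖ ^ 2 + α * ‖R.f1dd x‖ ^ 2) volume 0 ℓ := by
    apply ContinuousOn.intervalIntegrable; rwa [Set.uIcc_of_le hℓ.le]
  have hiU : IntervalIntegrable (fun x => ‖R.v x‖ ^ 2 + α * ‖R.u2 x‖ ^ 2) volume 0 ℓ := by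
    apply ContinuousOn.intervalIntegrable; rwa [Set.uIcc_of_le hℓ.le]
  have hiP : IntervalIntegrable
      (fun x => (R.f2 x * conj (R.v x) + (α:ℂ) * (R.f1dd x * conj (R.u2 x))).re)
      volume 0 ℓ := by
    apply ContinuousOn.intervalIntegrable; rwa [Set.uIcc_of_le hℓ.le]
  -- the quadratic is nonnegative
  have quad : ∀ t : ℝ, 0 ≤ NF2 * (t * t) + (2 * B) * t + NU2 := by
    intro t
    have e1 : ∀ x : ℝ, ‖(t:ℂ) * R.f2 x + R.v x‖ ^ 2 + α * ‖(t:ℂ) * R.f1dd x + R.u2 x‖ ^ 2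
        = (fun x => ‖R.f2 x‖ ^ 2 + α * ‖R.f1dd x‖ ^ 2) x * (t * t)
          + (fun x => (R.f2 x * conj (R.v x) + (α:ℂ) * (R.f1dd x * conj (R.u2 x))).re) x
            * (2 * t)
          + (fun x => ‖R.v x‖ ^ 2 + α * ‖R.u2 x‖ ^ 2) x := by
      intro x
      simp only [norm_combo, Complex.add_re, Complex.mul_re, Complex.ofReal_re,
        Complex.ofReal_im]
      ring
    have hsplit : (∫ x in (0:ℝ)..ℓ,
          (‖(t:ℂ) * R.f2 x + R.v x‖ ^ 2 + α * ‖(t:ℂ) * R.f1dd x + R.u2 x‖ ^ 2))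
        = (∫ x in (0:ℝ)..ℓ, (‖R.f2 x‖ ^ 2 + α * ‖R.f1dd x‖ ^ 2)) * (t * t)
          + (∫ x in (0:ℝ)..ℓ,
              (R.f2 x * conj (R.v x) + (α:ℂ) * (R.f1dd x * conj (R.u2 x))).re) * (2 * t)
          + (∫ x in (0:ℝ)..ℓ, (‖R.v x‖ ^ 2 + α * ‖R.u2 x‖ ^ 2)) := by
      rw [intervalIntegral.integral_congr (fun x _ => e1 x)]
      rw [intervalIntegral.integral_add ((hiF.mul_const _).add (hiP.mul_const _)) hiU,
        intervalIntegral.integral_add (hiF.mul_const _) (hiP.mul_const _),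
        intervalIntegral.integral_mul_const, intervalIntegral.integral_mul_const]
    have h0 : (0:ℝ) ≤ (∫ x in (0:ℝ)..ℓ,
          (‖(t:ℂ) * R.f2 x + R.v x‖ ^ 2 + α * ‖(t:ℂ) * R.f1dd x + R.u2 x‖ ^ 2))
        + (m * ‖(t:ℂ) * R.f41 + R.v 0 + (d:ℂ) * ((t:ℂ) * R.f42 + R.v1 0)‖ ^ 2
          + J * ‖(t:ℂ) * R.f42 + R.v1 0‖ ^ 2) := by
      have hint : (0:ℝ) ≤ ∫ x in (0:ℝ)..ℓ,
          (‖(t:ℂ) * R.f2 x + R.v x‖ ^ 2 + α * ‖(t:ℂ) * R.f1dd x + R.u2 x‖ ^ 2) := by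
        apply intervalIntegral.integral_nonneg hℓ.le
        intro x _
        have := sq_nonneg ‖(t:ℂ) * R.f2 x + R.v x‖
        have := sq_nonneg ‖(t:ℂ) * R.f1dd x + R.u2 x‖
        nlinarith [hα.le]
      have htip : (0:ℝ) ≤ m * ‖(t:ℂ) * R.f41 + R.v 0 + (d:ℂ) * ((t:ℂ) * R.f42 + R.v1 0)‖ ^ 2
          + J * ‖(t:ℂ) * R.f42 + R.v1 0‖ ^ 2 :=
        add_nonneg (mul_nonneg hm.le (sq_nonneg _)) (mul_nonneg hJ.le (sq_nonneg _))
      linarith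
    rw [hsplit, tip_quad m d J t R.f41 R.f42 (R.v 0) (R.v1 0)] at h0
    calc (0:ℝ) ≤ _ := h0
      _ = NF2 * (t * t) + (2 * B) * t + NU2 := by
          rw [hNF2, hNU2, hB, hTdef, hre _ hPint]
          ring
  -- discriminant argument
  have hdisc := discrim_le_zero quad
  rw [discrim] at hdisc
  have hNF2nn : (0:ℝ) ≤ NF2 := by
    have hrw : NF2 = (∫ x in (0:ℝ)..ℓ, (‖R.f2 x‖ ^ 2 + α * ‖R.f1dd x‖ ^ 2))
        + (m * ‖R.f41 + (d:ℂ) * R.f42‖ ^ 2 + J * ‖R.f42‖ ^ 2) := by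
      rw [hNF2, ← tip_nonneg_rewrite m d J R.f41 R.f42]; ring
    rw [hrw]
    have hint : (0:ℝ) ≤ ∫ x in (0:ℝ)..ℓ, (‖R.f2 x‖ ^ 2 + α * ‖R.f1dd x‖ ^ 2) := by
      apply intervalIntegral.integral_nonneg hℓ.le
      intro x _
      have := sq_nonneg ‖R.f2 x‖
      have := sq_nonneg ‖R.f1dd x‖
      nlinarith [hα.le]
    have htip : (0:ℝ) ≤ m * ‖R.f41 + (d:ℂ) * R.f42‖ ^ 2 + J * ‖R.f42‖ ^ 2 :=
      add_nonneg (mul_nonneg hm.le (sq_nonneg _)) (mul_nonneg hJ.le (sq_nonneg _))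
    linarith
  have hB2 : B ^ 2 ≤ NF2 * NU2 := by linarith only [hdisc]
  have hBle : B ≤ Real.sqrt NF2 * Real.sqrt NU2 := by
    have h1 : B ≤ |B| := le_abs_self B
    have h2 : |B| = Real.sqrt (B ^ 2) := (Real.sqrt_sq_eq_abs B).symm
    have h3 : Real.sqrt (B ^ 2) ≤ Real.sqrt (NF2 * NU2) := Real.sqrt_le_sqrt hB2
    rw [Real.sqrt_mul hNF2nn] at h3
    linarith
  -- lower bound on B
  have hlow : ε * (‖R.v 0‖ ^ 2 + ‖R.v1 0‖ ^ 2) ≤ B := by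
    have hBeq : B = γ * ‖R.v 0‖ ^ 2 + d * γ * (R.v 0 * conj (R.v1 0)).re
        + d * γs * ‖R.v1 0‖ ^ 2 := key
    rw [hBeq]
    have habs : -(‖R.v 0‖ * ‖R.v1 0‖) ≤ (R.v 0 * conj (R.v1 0)).re := by
      have h1 : |(R.v 0 * conj (R.v1 0)).re| ≤ ‖R.v 0 * conj (R.v1 0)‖ := by
        exact Complex.abs_re_le_norm _
      have h2 : ‖R.v 0 * conj (R.v1 0)‖ = ‖R.v 0‖ * ‖R.v1 0‖ := by
        rw [norm_mul, RCLike.norm_conj]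
      rw [h2] at h1
      linarith [neg_abs_le ((R.v 0 * conj (R.v1 0)).re)]
    have hε1 : ε ≤ γ / 4 := by rw [hεdef]; exact min_le_left _ _
    have hε2 : ε ≤ d * γs / 3 := by rw [hεdef]; exact min_le_right _ _
    exact quad_lower d γ γs ε _ _ _ hd hγ hyp habs hε1 hε2
  -- conclusion
  have hnF : normF R = Real.sqrt NF2 := by rw [hNF2]; simp only [normF]
  have hnU : normU R = Real.sqrt NU2 := by rw [hNU2]; simp only [normU]
  have hfinal : ε * (‖R.v 0‖ ^ 2 + ‖R.v1 0‖ ^ 2) ≤ normF R * normU R := by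
    rw [hnF, hnU]; linarith
  calc ‖R.v 0‖ ^ 2 + ‖R.v1 0‖ ^ 2 = ε * (‖R.v 0‖ ^ 2 + ‖R.v1 0‖ ^ 2) / ε :=
        (mul_div_cancel_left₀ _ hε.ne').symm
    _ ≤ (normF R * normU R) / ε := by
        gcongr
    _ = 1 / ε * normF R * normU R := by ring
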